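/- Let G be a countable group and H ≤ G an infinite subgroup such that the pair (G,H) has the relative property (T), meaning: for every complex Hilbert space 𝓗 and every unitary representation π of G on 𝓗 (a group homomorphism from G into the unitary group of 𝓗), if for every finite subset F ⊆ G and every ε > 0 there exists a unit vector ξ ∈ 𝓗 with ‖π(g)ξ − ξ‖ ≤ ε for all g ∈ F, then there exists a nonzero vector ξ₀ ∈ 𝓗 with π(h)ξ₀ = ξ₀ for all h ∈ H. Let σ be a free measure-preserving action of G on a probability space (X,μ) such that the restriction of σ to H is ergodic. Then σ is strongly ergodic: for every sequence (Aₙ) of measurable subsets of X such that for every g ∈ G the measures μ((g • Aₙ) Δ Aₙ) tend to 0 as n → ∞, one has μ(Aₙ)·(1 − μ(Aₙ)) → 0 as n → ∞. -/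

import Mathlib

open MeasureTheory Filter Pointwise
open scoped symmDiff

section Stmt3Aux

open TopologicalSpace
open scoped InnerProductSpace

set_option linter.unusedSectionVars false

noncomputable section

namespace Stmt3Aux

variable {X : Type*} [MeasurableSpace X] {μ : Measure X} [IsProbabilityMeasure μ]

lemma compMP_congr {f f' : X → X} (h : f = f') (hf : MeasurePreserving f μ μ)
    (hf' : MeasurePreserving f' μ μ) (u : Lp ℂ 2 μ) :
    Lp.compMeasurePreserving f hf u = Lp.compMeasurePreserving f' hf' u := by
  subst h; rfl

lemma compMP_comp {f f' : X → X} (hf : MeasurePreserving f μ μ) (hf' : MeasurePreserving f' μ μ)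
    (u : Lp ℂ 2 μ) :
    Lp.compMeasurePreserving f hf (Lp.compMeasurePreserving f' hf' u)
      = Lp.compMeasurePreserving (f' ∘ f) (hf'.comp hf) u := by
  apply Lp.ext
  have h1 := Lp.coeFn_compMeasurePreserving (Lp.compMeasurePreserving f' hf' u) hf
  have h2 : (⇑(Lp.compMeasurePreserving f' hf' u)) ∘ f =ᵐ[μ] (⇑u ∘ f') ∘ f :=
    (Lp.coeFn_compMeasurePreserving u hf').comp_tendsto hf.quasiMeasurePreserving.tendsto_ae
  have h3 := Lp.coeFn_compMeasurePreserving u (hf'.comp hf)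
  exact (h1.trans h2).trans h3.symm

lemma compMP_id (hf : MeasurePreserving (id : X → X) μ μ) (u : Lp ℂ 2 μ) :
    Lp.compMeasurePreserving id hf u = u := by
  apply Lp.ext
  exact Lp.coeFn_compMeasurePreserving u hf

variable (μ) in
/-- The constant-one function in `L²`. -/
def onef : Lp ℂ 2 μ := indicatorConstLp 2 MeasurableSet.univ (measure_ne_top μ Set.univ) (1:ℂ)

variable {G : Type*} [Group G] [MulAction G X]

variable (μ) in
/-- The Koopman linear isometry. -/
def koopL (hmp : ∀ g : G, MeasurePreserving (fun x : X => g • x) μ μ) (g : G) :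
    Lp ℂ 2 μ →ₗᵢ[ℂ] Lp ℂ 2 μ :=
  Lp.compMeasurePreservingₗᵢ ℂ (fun x => g⁻¹ • x) (hmp g⁻¹)

variable (hmp : ∀ g : G, MeasurePreserving (fun x : X => g • x) μ μ)

lemma koopL_apply (g : G) (u : Lp ℂ 2 μ) :
    koopL μ hmp g u = Lp.compMeasurePreserving (fun x => g⁻¹ • x) (hmp g⁻¹) u := rfl

lemma koopL_koopL (g g' : G) (u : Lp ℂ 2 μ) :
    koopL μ hmp g (koopL μ hmp g' u) = koopL μ hmp (g * g') u := by
  simp only [koopL_apply, compMP_comp]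
  exact compMP_congr (by funext x; simp [mul_smul]) _ _ u

lemma koopL_one (u : Lp ℂ 2 μ) : koopL μ hmp 1 u = u := by
  rw [koopL_apply, compMP_congr (f' := id) (by funext x; simp) _ (MeasurePreserving.id μ) u,
    compMP_id]

variable (μ) in
/-- The Koopman unitary. -/
def koop (g : G) : Lp ℂ 2 μ ≃ₗᵢ[ℂ] Lp ℂ 2 μ :=
  LinearIsometryEquiv.ofSurjective (koopL μ hmp g)
    (fun u => ⟨koopL μ hmp g⁻¹ u, by rw [koopL_koopL, mul_inv_cancel, koopL_one]⟩)

lemma koop_apply (g : G) (u : Lp ℂ 2 μ) : koop μ hmp g u = koopL μ hmp g u := rfl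

lemma koop_coeFn (g : G) (u : Lp ℂ 2 μ) :
    ⇑(koop μ hmp g u) =ᵐ[μ] (⇑u) ∘ (fun x => g⁻¹ • x) :=
  Lp.coeFn_compMeasurePreserving u (hmp g⁻¹)

lemma koop_mul (g g' : G) (u : Lp ℂ 2 μ) :
    koop μ hmp (g * g') u = koop μ hmp g (koop μ hmp g' u) :=
  (koopL_koopL hmp g g' u).symm

lemma koop_one (u : Lp ℂ 2 μ) : koop μ hmp 1 u = u := koopL_one hmp u

lemma koop_symm (g : G) : (koop μ hmp g).symm = koop μ hmp g⁻¹ := by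
  refine LinearIsometryEquiv.ext fun u => ?_
  apply (koop μ hmp g).injective
  rw [LinearIsometryEquiv.apply_symm_apply, ← koop_mul, mul_inv_cancel, koop_one]

lemma indLp_congr {s t : Set X} (h : s = t) (hs : MeasurableSet s) (ht : MeasurableSet t)
    (hμs : μ s ≠ ⊤) (hμt : μ t ≠ ⊤) (c : ℂ) :
    indicatorConstLp 2 hs hμs c = indicatorConstLp (μ := μ) 2 ht hμt c := by subst h; rfl

include hmp in
lemma smul_set_measurable {A : Set X} (hA : MeasurableSet A) (g : G) :
    MeasurableSet (g • A) := by
  have h : g • A = (fun x => g⁻¹ • x) ⁻¹' A := by rw [Set.preimage_smul, inv_inv]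
  rw [h]
  exact (hmp g⁻¹).measurable hA

lemma koop_indicator {A : Set X} (hA : MeasurableSet A) (g : G) :
    koop μ hmp g (indicatorConstLp 2 hA (measure_ne_top μ A) (1:ℂ))
      = indicatorConstLp 2 (smul_set_measurable hmp hA g) (measure_ne_top μ _) (1:ℂ) := by
  rw [koop_apply, koopL_apply, Lp.indicatorConstLp_compMeasurePreserving]
  exact indLp_congr (by rw [Set.preimage_smul, inv_inv]) _ _ _ _ _

lemma koop_onef (g : G) : koop μ hmp g (onef μ) = onef μ := by
  rw [onef, koop_apply, koopL_apply, Lp.indicatorConstLp_compMeasurePreserving]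
  exact indLp_congr Set.preimage_univ _ _ _ _ _

/- ### Inner product computations -/

lemma inner_ind {s t : Set X} (hs : MeasurableSet s) (ht : MeasurableSet t) :
    ⟪indicatorConstLp 2 hs (measure_ne_top μ s) (1:ℂ),
      indicatorConstLp 2 ht (measure_ne_top μ t) (1:ℂ)⟫_ℂ = ((μ (s ∩ t)).toReal : ℂ) := by
  rw [L2.inner_indicatorConstLp_one hs (measure_ne_top μ s),
    setIntegral_indicatorConstLp hs ht (measure_ne_top μ t)]
  rw [Set.inter_comm t s]
  simp
  rfl

lemma inner_ind_onef {s : Set X} (hs : MeasurableSet s) :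
    ⟪indicatorConstLp 2 hs (measure_ne_top μ s) (1:ℂ), onef μ⟫_ℂ = ((μ s).toReal : ℂ) := by
  rw [onef, inner_ind hs MeasurableSet.univ, Set.inter_univ]

lemma onef_inner_ind {s : Set X} (hs : MeasurableSet s) :
    ⟪onef μ, indicatorConstLp 2 hs (measure_ne_top μ s) (1:ℂ)⟫_ℂ = ((μ s).toReal : ℂ) := by
  rw [onef, inner_ind MeasurableSet.univ hs, Set.univ_inter]

lemma onef_inner_onef : ⟪onef μ, onef μ⟫_ℂ = 1 := by
  rw [onef, inner_ind MeasurableSet.univ MeasurableSet.univ, Set.univ_inter]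
  simp

lemma norm_ind_sub_ind_sq {s t : Set X} (hs : MeasurableSet s) (ht : MeasurableSet t) :
    ‖indicatorConstLp 2 hs (measure_ne_top μ s) (1:ℂ)
      - indicatorConstLp 2 ht (measure_ne_top μ t) (1:ℂ)‖ ^ 2 = (μ (s ∆ t)).toReal := by
  rw [← inner_self_eq_norm_sq (𝕜 := ℂ)]
  rw [inner_sub_left, inner_sub_right, inner_sub_right, inner_ind hs hs, inner_ind hs ht,
    inner_ind ht hs, inner_ind ht ht, Set.inter_self, Set.inter_self]
  have h1 : μ (s ∆ t) = μ (s \ t) + μ (t \ s) :=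
    measure_symmDiff_eq hs.nullMeasurableSet ht.nullMeasurableSet
  have h2 : μ (s ∩ t) + μ (s \ t) = μ s := measure_inter_add_diff s ht
  have h3 : μ (t ∩ s) + μ (t \ s) = μ t := measure_inter_add_diff t hs
  have e1 : (μ (s ∆ t)).toReal = (μ (s \ t)).toReal + (μ (t \ s)).toReal := by
    rw [h1, ENNReal.toReal_add (measure_ne_top μ _) (measure_ne_top μ _)]
  have e2 : (μ (s ∩ t)).toReal + (μ (s \ t)).toReal = (μ s).toReal := by
    rw [← ENNReal.toReal_add (measure_ne_top μ _) (measure_ne_top μ _), h2]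
  have e3 : (μ (t ∩ s)).toReal + (μ (t \ s)).toReal = (μ t).toReal := by
    rw [← ENNReal.toReal_add (measure_ne_top μ _) (measure_ne_top μ _), h3]
  have e4 : (μ (s ∩ t)).toReal = (μ (t ∩ s)).toReal := by rw [Set.inter_comm]
  simp only [map_sub, RCLike.re_to_complex, Complex.ofReal_re]
  linarith

lemma norm_xi_sq {s : Set X} (hs : MeasurableSet s) :
    ‖indicatorConstLp 2 hs (measure_ne_top μ s) (1:ℂ) - (((μ s).toReal : ℝ) : ℂ) • onef μ‖ ^ 2
      = (μ s).toReal * (1 - (μ s).toReal) := by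
  rw [← inner_self_eq_norm_sq (𝕜 := ℂ)]
  rw [inner_sub_left, inner_sub_right, inner_sub_right, inner_smul_left, inner_smul_right,
    inner_smul_left, inner_smul_right, inner_ind hs hs, Set.inter_self, inner_ind_onef hs,
    onef_inner_ind hs, onef_inner_onef]
  simp only [RCLike.conj_ofReal, mul_one, map_sub, RCLike.re_to_complex, RCLike.im_to_complex,
    Complex.ofReal_re, Complex.ofReal_im, Complex.sub_re, Complex.mul_re, Complex.mul_im,
    Complex.one_re, Complex.one_im, mul_zero, sub_zero, mul_one, zero_mul]
  ring

/- ### Universe transfer -/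

lemma small_of_separableSpace (E : Type*) [MetricSpace E] [SeparableSpace E] [Nonempty E] :
    Small.{0} E := by
  obtain ⟨u, hu⟩ := TopologicalSpace.exists_dense_seq E
  refine small_of_injective (f := fun v (n : ℕ) => dist v (u n)) ?_
  intro a b hab
  have key : ∀ ε : ℝ, 0 < ε → dist a b < 2 * ε := by
    intro ε hε
    obtain ⟨n, hn⟩ := Metric.denseRange_iff.1 hu a ε hε
    have hb : dist b (u n) = dist a (u n) := (congrFun hab n).symm
    calc dist a b ≤ dist a (u n) + dist (u n) b := dist_triangle a (u n) b
    _ = dist a (u n) + dist b (u n) := by rw [dist_comm (u n) b]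
    _ < 2 * ε := by rw [hb]; linarith
  by_contra hne
  have hpos : 0 < dist a b := dist_pos.2 hne
  have := key (dist a b / 4) (by linarith)
  linarith

/-- Restrict a linear isometry equivalence to an invariant submodule. -/
def restrictEquiv {E : Type*} [NormedAddCommGroup E] [NormedSpace ℂ E]
    (e : E ≃ₗᵢ[ℂ] E) (p : Submodule ℂ E) (h₁ : ∀ v ∈ p, e v ∈ p)
    (h₂ : ∀ v ∈ p, e.symm v ∈ p) : p ≃ₗᵢ[ℂ] p where
  toLinearEquiv :=
    { toFun := fun v => ⟨e v, h₁ v v.2⟩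
      map_add' := fun u v => Subtype.ext (by simp)
      map_smul' := fun c v => Subtype.ext (by simp)
      invFun := fun v => ⟨e.symm v, h₂ v v.2⟩
      left_inv := fun v => Subtype.ext (e.symm_apply_apply v)
      right_inv := fun v => Subtype.ext (e.apply_symm_apply v) }
  norm_map' := fun v => e.norm_map v

@[simp] lemma restrictEquiv_apply_coe {E : Type*} [NormedAddCommGroup E] [NormedSpace ℂ E]
    (e : E ≃ₗᵢ[ℂ] E) (p : Submodule ℂ E) (h₁ : ∀ v ∈ p, e v ∈ p)
    (h₂ : ∀ v ∈ p, e.symm v ∈ p) (v : p) :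
    (restrictEquiv e p h₁ h₂ v : E) = e v := rfl

lemma relT_transfer {G : Type*} [Group G] (H : Subgroup G)
    (relT : ∀ (𝓗 : Type) [NormedAddCommGroup 𝓗] [InnerProductSpace ℂ 𝓗] [CompleteSpace 𝓗]
      (π : G →* (𝓗 ≃ₗᵢ[ℂ] 𝓗)),
      (∀ (F : Finset G) (ε : ℝ), 0 < ε → ∃ ξ : 𝓗, ‖ξ‖ = 1 ∧ ∀ g ∈ F, ‖π g ξ - ξ‖ ≤ ε) →
      ∃ ξ₀ : 𝓗, ξ₀ ≠ 0 ∧ ∀ h ∈ H, π h ξ₀ = ξ₀)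
    (E : Type*) [NormedAddCommGroup E] [InnerProductSpace ℂ E] [CompleteSpace E]
    [SeparableSpace E] (π : G →* (E ≃ₗᵢ[ℂ] E))
    (hai : ∀ (F : Finset G) (ε : ℝ), 0 < ε → ∃ ξ : E, ‖ξ‖ = 1 ∧ ∀ g ∈ F, ‖π g ξ - ξ‖ ≤ ε) :
    ∃ ξ₀ : E, ξ₀ ≠ 0 ∧ ∀ h ∈ H, π h ξ₀ = ξ₀ := by
  haveI : Nonempty E := ⟨0⟩
  haveI : Small.{0} E := small_of_separableSpace E
  let W : Type := Shrink.{0} E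
  let eW : W ≃ₗ[ℂ] E := Shrink.linearEquiv ℂ E
  letI : InnerProductSpace ℂ W :=
    { inner := fun a b => inner ℂ (eW a) (eW b)
      norm_sq_eq_re_inner := fun w => (inner_self_eq_norm_sq (𝕜 := ℂ) (eW w)).symm
      conj_inner_symm := fun a b => inner_conj_symm _ _
      add_left := fun a b c => by simp [inner_add_left]
      smul_left := fun a b c => by simp [inner_smul_left, mul_comm] }
  let isoW : W ≃ₗᵢ[ℂ] E := { toLinearEquiv := eW, norm_map' := fun w => rfl }
  letI : CompleteSpace W := isoW.toIsometryEquiv.completeSpace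
  let πW : G →* (W ≃ₗᵢ[ℂ] W) := MonoidHom.mk'
    (fun g => isoW.trans ((π g).trans isoW.symm))
    (fun g₁ g₂ => by
      refine LinearIsometryEquiv.ext fun w => ?_
      simp [LinearIsometryEquiv.coe_mul, LinearIsometryEquiv.trans_apply, map_mul,
        LinearIsometryEquiv.coe_mul (π g₁) (π g₂)])
  obtain ⟨ξ₀W, hne, hinv⟩ := relT W πW (by
    intro F ε hε
    obtain ⟨ξ, h1, h2⟩ := hai F ε hε
    refine ⟨isoW.symm ξ, (isoW.symm.norm_map ξ).trans h1, fun g hg => ?_⟩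
    have : πW g (isoW.symm ξ) - isoW.symm ξ = isoW.symm (π g ξ - ξ) := by
      simp [πW, LinearIsometryEquiv.trans_apply, map_sub]
    rw [this, LinearIsometryEquiv.norm_map]
    exact h2 g hg)
  refine ⟨isoW ξ₀W, by simpa using hne, fun h hH => ?_⟩
  have := congrArg isoW (hinv h hH)
  simpa [πW, LinearIsometryEquiv.trans_apply] using this

/- ### The invariant subspace generated by the almost invariant vectors -/

variable (μ) (A : ℕ → Set X) (hA : ∀ n, MeasurableSet (A n))

/-- The mean-zero indicator functions. -/
def xi (n : ℕ) : Lp ℂ 2 μ :=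
  indicatorConstLp 2 (hA n) (measure_ne_top μ _) (1:ℂ) - (((μ (A n)).toReal : ℝ) : ℂ) • onef μ

/-- The closed `G`-invariant subspace generated by the `xi`. -/
def Vsub : Submodule ℂ (Lp ℂ 2 μ) :=
  (Submodule.span ℂ
    (Set.range fun p : G × ℕ => koop μ hmp p.1 (xi μ A hA p.2))).topologicalClosure

lemma koop_xi_mem (g : G) (n : ℕ) : koop μ hmp g (xi μ A hA n) ∈ Vsub μ hmp A hA :=
  Submodule.le_topologicalClosure _ (Submodule.subset_span ⟨(g, n), rfl⟩)

lemma xi_mem (n : ℕ) : xi μ A hA n ∈ Vsub μ hmp A hA := by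
  have := koop_xi_mem μ hmp A hA 1 n
  rwa [koop_one] at this

lemma Vsub_stable (g : G) : ∀ v ∈ Vsub μ hmp A hA, koop μ hmp g v ∈ Vsub μ hmp A hA := by
  intro v hv
  set S := Set.range fun p : G × ℕ => koop μ hmp p.1 (xi μ A hA p.2) with hS
  have hspan : Set.MapsTo (koop μ hmp g) (Submodule.span ℂ S) (Submodule.span ℂ S) := by
    intro u hu
    have hmap : Submodule.map ((koop μ hmp g).toLinearEquiv.toLinearMap) (Submodule.span ℂ S)
        ≤ Submodule.span ℂ S := by
      rw [Submodule.map_span]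
      refine Submodule.span_le.2 ?_
      rintro _ ⟨_, ⟨⟨g', n⟩, rfl⟩, rfl⟩
      refine Submodule.subset_span ⟨(g * g', n), ?_⟩
      show koop μ hmp (g * g') (xi μ A hA n) = _
      rw [koop_mul]
      rfl
    exact hmap ⟨u, hu, rfl⟩
  have hv' : v ∈ closure (Submodule.span ℂ S : Set (Lp ℂ 2 μ)) := by
    rw [← Submodule.topologicalClosure_coe]; exact hv
  have hres := map_mem_closure (koop μ hmp g).continuous hv' hspan
  rw [← SetLike.mem_coe]
  show koop μ hmp g v ∈ ((Submodule.span ℂ S).topologicalClosure : Set (Lp ℂ 2 μ))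
  rw [Submodule.topologicalClosure_coe]
  exact hres

/-- The restriction of the Koopman representation to `Vsub`, as a homomorphism. -/
def piV : G →* (Vsub μ hmp A hA ≃ₗᵢ[ℂ] Vsub μ hmp A hA) :=
  MonoidHom.mk'
    (fun g => restrictEquiv (koop μ hmp g) (Vsub μ hmp A hA) (Vsub_stable μ hmp A hA g)
      (fun v hv => by rw [koop_symm]; exact Vsub_stable μ hmp A hA g⁻¹ v hv))
    (fun g₁ g₂ => by
      refine LinearIsometryEquiv.ext fun v => ?_
      refine Subtype.ext ?_
      rw [LinearIsometryEquiv.coe_mul]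
      show koop μ hmp (g₁ * g₂) (v : Lp ℂ 2 μ) = _
      rw [koop_mul]
      rfl)

lemma piV_apply_coe (g : G) (v : Vsub μ hmp A hA) :
    (piV μ hmp A hA g v : Lp ℂ 2 μ) = koop μ hmp g v := rfl

lemma onef_inner_Vsub (v : Lp ℂ 2 μ) (hv : v ∈ Vsub μ hmp A hA) : ⟪onef μ, v⟫_ℂ = 0 := by
  have hker : Vsub μ hmp A hA ≤ (innerSL ℂ (onef μ)).ker := by
    refine Submodule.topologicalClosure_minimal _ ?_ (ContinuousLinearMap.isClosed_ker _)
    refine Submodule.span_le.2 ?_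
    rintro _ ⟨⟨g, n⟩, rfl⟩
    rw [SetLike.mem_coe, LinearMap.mem_ker]
    show ⟪onef μ, koop μ hmp g (xi μ A hA n)⟫_ℂ = 0
    conv_lhs => rw [← koop_onef hmp g, LinearIsometryEquiv.inner_map_map]
    rw [xi, inner_sub_right, inner_smul_right, onef_inner_ind (hA n), onef_inner_onef]
    simp
  have := hker hv
  rwa [LinearMap.mem_ker] at this

lemma koop_xi_sub_xi (g : G) (n : ℕ) :
    koop μ hmp g (xi μ A hA n) - xi μ A hA n
      = indicatorConstLp 2 (smul_set_measurable hmp (hA n) g) (measure_ne_top μ _) (1:ℂ)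
        - indicatorConstLp 2 (hA n) (measure_ne_top μ _) (1:ℂ) := by
  rw [xi, map_sub, _root_.map_smul, koop_indicator, koop_onef]
  abel

lemma norm_koop_xi_sub_xi_sq (g : G) (n : ℕ) :
    ‖koop μ hmp g (xi μ A hA n) - xi μ A hA n‖ ^ 2 = (μ ((g • A n) ∆ A n)).toReal := by
  rw [koop_xi_sub_xi, norm_ind_sub_ind_sq]

lemma norm_xi_sq' (n : ℕ) :
    ‖xi μ A hA n‖ ^ 2 = (μ (A n)).toReal * (1 - (μ (A n)).toReal) := norm_xi_sq (hA n)

lemma Vsub_separableSpace [Countable G] : SeparableSpace (Vsub μ hmp A hA) := by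
  have hS : (Set.range fun p : G × ℕ => koop μ hmp p.1 (xi μ A hA p.2)).Countable :=
    Set.countable_range _
  have h1 : IsSeparable
      ((Submodule.span ℂ (Set.range fun p : G × ℕ => koop μ hmp p.1 (xi μ A hA p.2))) :
        Set (Lp ℂ 2 μ)) := hS.isSeparable.span
  have h2 : IsSeparable ((Vsub μ hmp A hA : Submodule ℂ (Lp ℂ 2 μ)) : Set (Lp ℂ 2 μ)) := by
    show IsSeparable (((Submodule.span ℂ _).topologicalClosure : Submodule ℂ (Lp ℂ 2 μ)) :
      Set (Lp ℂ 2 μ))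
    rw [Submodule.topologicalClosure_coe]
    exact isSeparable_closure.2 h1
  exact h2.separableSpace

lemma Vsub_complete : CompleteSpace (Vsub μ hmp A hA) :=
  (Submodule.isClosed_topologicalClosure _).completeSpace_coe

end Stmt3Aux

end

end Stmt3Aux

open Stmt3Aux
open scoped InnerProductSpace ENNReal

/-- If `(G,H)` has the relative property (T) with `H` infinite, and `σ` is a free
measure-preserving action of `G` on a probability space whose restriction to `H` is ergodic,
then `σ` is strongly ergodic. -/
theorem stmt3 {G : Type*} [Group G] [Countable G] (H : Subgroup G) [Infinite H]
    (relT : ∀ (𝓗 : Type) [NormedAddCommGroup 𝓗] [InnerProductSpace ℂ 𝓗] [CompleteSpace 𝓗]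
      (π : G →* (𝓗 ≃ₗᵢ[ℂ] 𝓗)),
      (∀ (F : Finset G) (ε : ℝ), 0 < ε → ∃ ξ : 𝓗, ‖ξ‖ = 1 ∧ ∀ g ∈ F, ‖π g ξ - ξ‖ ≤ ε) →
      ∃ ξ₀ : 𝓗, ξ₀ ≠ 0 ∧ ∀ h ∈ H, π h ξ₀ = ξ₀)
    {X : Type*} [MeasurableSpace X] (μ : Measure X) [IsProbabilityMeasure μ]
    [MulAction G X]
    (hmp : ∀ g : G, MeasurePreserving (fun x : X => g • x) μ μ)
    (hfree : ∀ g : G, g ≠ 1 → μ {x : X | g • x = x} = 0)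
    (herg : ∀ A : Set X, MeasurableSet A → (∀ h ∈ H, μ ((h • A) ∆ A) = 0) →
      μ A = 0 ∨ μ A = 1)
    (A : ℕ → Set X) (hA : ∀ n, MeasurableSet (A n))
    (hAai : ∀ g : G, Tendsto (fun n => μ ((g • A n) ∆ A n)) atTop (nhds 0)) :
    Tendsto (fun n => μ (A n) * (1 - μ (A n))) atTop (nhds 0) := by
  classical
  by_contra hcon
  rw [ENNReal.tendsto_nhds_zero] at hcon
  push_neg at hcon
  obtain ⟨ε₀, hε₀, hfreq⟩ := hcon
  simp only [← not_le] at hfreq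
  set δ : ℝ≥0∞ := min ε₀ 1 with hδdef
  have hδ0 : δ ≠ 0 := (lt_min hε₀ zero_lt_one).ne'
  have hδtop : δ ≠ ⊤ := ((min_le_right ε₀ 1).trans_lt ENNReal.one_lt_top).ne
  have hδfreq : ∃ᶠ n in atTop, δ ≤ μ (A n) * (1 - μ (A n)) :=
    hfreq.mono fun n hn => (min_le_left ε₀ 1).trans (not_le.1 hn).le
  haveI := Vsub_separableSpace μ hmp A hA
  haveI := Vsub_complete μ hmp (G := G) A hA
  -- almost invariant vectors in Vsub
  have hai : ∀ (F : Finset G) (ε : ℝ), 0 < ε →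
      ∃ ξv : Vsub μ hmp A hA, ‖ξv‖ = 1 ∧ ∀ g ∈ F, ‖piV μ hmp A hA g ξv - ξv‖ ≤ ε := by
    intro F ε hε
    have hev : ∀ᶠ n in atTop, ∀ g ∈ F, μ ((g • A n) ∆ A n) ≤ δ * ENNReal.ofReal (ε ^ 2) := by
      rw [eventually_all_finset]
      intro g hg
      have hpos : (0:ℝ≥0∞) < δ * ENNReal.ofReal (ε ^ 2) :=
        ENNReal.mul_pos hδ0 (ENNReal.ofReal_pos.2 (pow_pos hε 2)).ne'
      exact (hAai g).eventually_le_const hpos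
    obtain ⟨n, hn1, hn2⟩ := (hδfreq.and_eventually hev).exists
    have haA : μ (A n) ≤ 1 := prob_le_one
    have hfin : μ (A n) * (1 - μ (A n)) ≠ ⊤ :=
      ENNReal.mul_ne_top (haA.trans_lt ENNReal.one_lt_top).ne
        ((tsub_le_self.trans_lt ENNReal.one_lt_top).ne)
    have hN : δ.toReal ≤ (μ (A n)).toReal * (1 - (μ (A n)).toReal) := by
      have h := ENNReal.toReal_mono hfin hn1
      rwa [ENNReal.toReal_mul, ENNReal.toReal_sub_of_le haA ENNReal.one_ne_top,
        ENNReal.toReal_one] at h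
    have hδR : 0 < δ.toReal := ENNReal.toReal_pos hδ0 hδtop
    have hxisq : ‖xi μ A hA n‖ ^ 2 = (μ (A n)).toReal * (1 - (μ (A n)).toReal) :=
      norm_xi_sq' μ A hA n
    have hxin : 0 < ‖xi μ A hA n‖ := by
      by_contra hle
      push_neg at hle
      have h0 : ‖xi μ A hA n‖ = 0 := le_antisymm hle (norm_nonneg _)
      rw [h0] at hxisq
      norm_num at hxisq
      rcases hxisq with h | h <;> nlinarith
    set c : ℂ := ((‖xi μ A hA n‖⁻¹ : ℝ) : ℂ) with hc
    refine ⟨⟨c • xi μ A hA n, Submodule.smul_mem _ _ (xi_mem μ hmp A hA n)⟩, ?_, ?_⟩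
    · show ‖c • xi μ A hA n‖ = 1
      rw [norm_smul, hc]
      rw [Complex.norm_real, Real.norm_eq_abs, abs_of_pos (inv_pos.2 hxin)]
      field_simp
    · intro g hg
      have key : ‖koop μ hmp g (xi μ A hA n) - xi μ A hA n‖ ≤ ε * ‖xi μ A hA n‖ := by
        have hsq : ‖koop μ hmp g (xi μ A hA n) - xi μ A hA n‖ ^ 2
            ≤ (ε * ‖xi μ A hA n‖) ^ 2 := by
          rw [norm_koop_xi_sub_xi_sq]
          have h1 : (μ ((g • A n) ∆ A n)).toReal ≤ (δ * ENNReal.ofReal (ε ^ 2)).toReal :=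
            ENNReal.toReal_mono (ENNReal.mul_ne_top hδtop ENNReal.ofReal_ne_top) (hn2 g hg)
          rw [ENNReal.toReal_mul, ENNReal.toReal_ofReal (sq_nonneg ε)] at h1
          calc (μ ((g • A n) ∆ A n)).toReal ≤ δ.toReal * ε ^ 2 := h1
          _ ≤ ((μ (A n)).toReal * (1 - (μ (A n)).toReal)) * ε ^ 2 := by nlinarith
          _ = (ε * ‖xi μ A hA n‖) ^ 2 := by rw [mul_pow, ← hxisq]; ring
        have h2 : (0:ℝ) ≤ ε * ‖xi μ A hA n‖ := le_of_lt (mul_pos hε hxin)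
        nlinarith [norm_nonneg (koop μ hmp g (xi μ A hA n) - xi μ A hA n)]
      have hcoe : ((piV μ hmp A hA g ⟨c • xi μ A hA n,
          Submodule.smul_mem _ _ (xi_mem μ hmp A hA n)⟩
          - ⟨c • xi μ A hA n, Submodule.smul_mem _ _ (xi_mem μ hmp A hA n)⟩ :
            Vsub μ hmp A hA) : Lp ℂ 2 μ)
          = c • (koop μ hmp g (xi μ A hA n) - xi μ A hA n) := by
        rw [AddSubgroupClass.coe_sub, piV_apply_coe]
        show koop μ hmp g (c • xi μ A hA n) - c • xi μ A hA n = _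
        rw [_root_.map_smul, smul_sub]
      show ‖((piV μ hmp A hA g _ - _ : Vsub μ hmp A hA) : Lp ℂ 2 μ)‖ ≤ ε
      rw [hcoe, norm_smul, hc, Complex.norm_real, Real.norm_eq_abs,
        abs_of_pos (inv_pos.2 hxin)]
      calc ‖xi μ A hA n‖⁻¹ * ‖koop μ hmp g (xi μ A hA n) - xi μ A hA n‖
          ≤ ‖xi μ A hA n‖⁻¹ * (ε * ‖xi μ A hA n‖) := by
            exact mul_le_mul_of_nonneg_left key (le_of_lt (inv_pos.2 hxin))
      _ = ε := by field_simp
  obtain ⟨ξ₀, hξ₀ne, hξ₀inv⟩ := relT_transfer H relT (Vsub μ hmp A hA) (piV μ hmp A hA) hai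
  set f₀ : Lp ℂ 2 μ := (ξ₀ : Lp ℂ 2 μ) with hf₀def
  have hf₀ne : f₀ ≠ 0 := fun h => hξ₀ne (Subtype.ext h)
  have hkoopinv : ∀ h ∈ H, koop μ hmp h f₀ = f₀ := by
    intro h hH
    have := congrArg (Subtype.val) (hξ₀inv h hH)
    rw [piV_apply_coe] at this
    exact this
  -- a measurable representative
  have hsm := Lp.aestronglyMeasurable f₀
  set F : X → ℂ := hsm.mk f₀ with hFdef
  have hFmeas : Measurable F := hsm.stronglyMeasurable_mk.measurable
  have hFae : ⇑f₀ =ᵐ[μ] F := hsm.ae_eq_mk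
  have hFinv : ∀ h ∈ H, (fun x => F (h⁻¹ • x)) =ᵐ[μ] F := by
    intro h hH
    have t1 : ⇑f₀ ∘ (fun x => h⁻¹ • x) =ᵐ[μ] F ∘ (fun x => h⁻¹ • x) :=
      hFae.comp_tendsto (hmp h⁻¹).quasiMeasurePreserving.tendsto_ae
    have t2 := koop_coeFn hmp h f₀
    rw [hkoopinv h hH] at t2
    exact (t1.symm.trans (t2.symm.trans hFae) : _)
  -- F is a.e. constant by ergodicity of H
  obtain ⟨cst, hcst⟩ : ∃ cst : ℂ, F =ᵐ[μ] Function.const X cst := by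
    refine exists_eventuallyEq_const_of_forall_separating (l := ae μ) MeasurableSet
      (fun U hU => ?_)
    set B := F ⁻¹' U with hBdef
    have hBm : MeasurableSet B := hFmeas hU
    have hBinv : ∀ h ∈ H, μ ((h • B) ∆ B) = 0 := by
      intro h hH
      have hnull : μ {x | ¬ F (h⁻¹ • x) = F x} = 0 := by
        have h1 : ∀ᵐ x ∂μ, F (h⁻¹ • x) = F x := hFinv h hH
        rwa [MeasureTheory.ae_iff] at h1
      refine measure_mono_null ?_ hnull
      intro x hx
      have hsetB : h • B = (fun x => h⁻¹ • x) ⁻¹' B := by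
        rw [Set.preimage_smul, inv_inv]
      rw [hsetB] at hx
      rcases Set.mem_symmDiff.1 hx with ⟨h1, h2⟩ | ⟨h1, h2⟩
      · intro heq
        refine h2 ?_
        show F x ∈ U
        rw [← heq]
        exact h1
      · intro heq
        refine h2 ?_
        show F (h⁻¹ • x) ∈ U
        rw [heq]
        exact h1
    rcases herg B hBm hBinv with h0 | h1
    · refine Or.inr ?_
      rw [Filter.Eventually, mem_ae_iff]
      have : {x | F x ∉ U}ᶜ = B := by ext x; simp [hBdef]
      rwa [this]
    · refine Or.inl ?_
      rw [Filter.Eventually, mem_ae_iff]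
      have : {x | F x ∈ U}ᶜ = Bᶜ := by ext x; simp [hBdef]
      rw [this]
      exact (prob_compl_eq_zero_iff hBm).2 h1
  -- conclude : the constant is the mean, which is zero
  have hint : ⟪onef μ, f₀⟫_ℂ = cst := by
    rw [onef, L2.inner_indicatorConstLp_one MeasurableSet.univ (measure_ne_top μ _) f₀]
    rw [setIntegral_univ]
    calc ∫ x, f₀ x ∂μ = ∫ _, cst ∂μ := integral_congr_ae (hFae.trans hcst)
    _ = cst := by simp
  have h0 : ⟪onef μ, f₀⟫_ℂ = 0 := onef_inner_Vsub μ hmp A hA f₀ ξ₀.2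
  rw [h0] at hint
  apply hf₀ne
  rw [Lp.eq_zero_iff_ae_eq_zero]
  refine (hFae.trans hcst).trans ?_
  filter_upwards [] with x
  simp [Function.const, ← hint]
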